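/- Let X be a compact metric space and T : X → X continuous. Suppose there are constants d, d₁,…,d_k > 0 with Σᵢ dᵢ ≤ d and λ₁ ≥ ⋯ ≥ λ_k > 1 such that for all small δ > 0 and all small ε > 0 and all n ≥ 1, the minimal number M(ε,n) of (n,ε)-Bowen balls needed to cover X and the minimal number N(r) of r-balls needed to cover X satisfy C(ε,n)·M(ε,n) ≥ N(r(ε,n)), where C(ε,n) ≤ 2^d (λ₁−δ)^{d(n−1)} ∏_{i=1}^k (λ_i−δ)^{−d_i(n−1)} and r(ε,n) = c·ε·(λ₁−δ)^{−(n−1)} for some constant c > 0. Then h_top(T) ≥ (dim_H(X) − d)·log λ₁ + Σ_{i=1}^k d_i log λ_i, where dim_H denotes Hausdorff dimension (using dim_H(X) ≤ liminf_{r→0} log N(r)/log(1/r)). -/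

import Mathlib

open Filter Topology

lemma net_exists' {X : Type*} [MetricSpace X] [CompactSpace X] {r : ℝ} (hr : 0 < r) :
    ∃ s : Finset X, ∀ y : X, ∃ x ∈ s, dist y x < r := by
  obtain ⟨t, -, htf, hcov⟩ := isCompact_univ.finite_cover_balls (s := (Set.univ : Set X)) hr
  refine ⟨htf.toFinset, fun y => ?_⟩
  rcases Set.mem_iUnion₂.mp (hcov (Set.mem_univ y)) with ⟨x, hx, hxy⟩
  exact ⟨x, htf.mem_toFinset.mpr hx, Metric.mem_ball.mp hxy⟩

lemma bowen_cover' {X : Type*} [MetricSpace X] [Nonempty X] (T : X → X) {ε : ℝ}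
    (F : Finset X) (hF : ∀ y : X, ∃ x ∈ F, dist y x < ε / 2) (n : ℕ) :
    ∃ s : Finset X, s.card ≤ F.card ^ n ∧
      ∀ y : X, ∃ x ∈ s, ∀ j < n, dist (T^[j] y) (T^[j] x) ≤ ε := by
  classical
  set P : (Fin n → X) → Prop := fun σ => ∃ z : X, ∀ j : Fin n, dist (T^[j.1] z) (σ j) < ε / 2
    with hP
  set pick : (Fin n → X) → X := fun σ => if h : P σ then h.choose else Classical.arbitrary X
    with hpick
  refine ⟨Finset.image (fun σ : Fin n → {x // x ∈ F} => pick (fun j => (σ j : X))) Finset.univ,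
    ?_, ?_⟩
  · refine Finset.card_image_le.trans ?_
    simp [Finset.card_univ]
  · intro y
    set σ' : Fin n → {x // x ∈ F} :=
      fun j => ⟨(hF (T^[j.1] y)).choose, (hF (T^[j.1] y)).choose_spec.1⟩ with hσ'
    have hPσ : P (fun j => (σ' j : X)) :=
      ⟨y, fun j => (hF (T^[j.1] y)).choose_spec.2⟩
    refine ⟨pick (fun j => (σ' j : X)), Finset.mem_image_of_mem _ (Finset.mem_univ σ'), ?_⟩
    intro j hj
    have hdef : pick (fun j => (σ' j : X)) = hPσ.choose := dif_pos hPσ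
    have h2 := hPσ.choose_spec ⟨j, hj⟩
    have h1 := (hF (T^[j] y)).choose_spec.2
    calc dist (T^[j] y) (T^[j] (pick (fun j => (σ' j : X))))
        ≤ dist (T^[j] y) ((σ' ⟨j, hj⟩ : X))
            + dist ((σ' ⟨j, hj⟩ : X)) (T^[j] (pick (fun j => (σ' j : X)))) := dist_triangle _ _ _
      _ ≤ ε / 2 + ε / 2 := by
          rw [hdef]
          exact add_le_add h1.le (by rw [dist_comm]; exact h2.le)
      _ = ε := by ring


/-- From the covering inequality between Bowen-ball covering numbers `M` and metric
covering numbers `N`, the topological entropy is bounded below by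
`(dim_H X − d)·log λ₁ + Σ dᵢ log λᵢ`. -/
theorem stmt_6 {X : Type*} [MetricSpace X] [CompactSpace X]
    (T : X → X) (hT : Continuous T)
    (k : ℕ) (hk : 0 < k) (d : ℝ) (hd : 0 < d)
    (dd lam : Fin k → ℝ) (hdd : ∀ i, 0 < dd i) (hsum : ∑ i, dd i ≤ d)
    (hlam : ∀ i, 1 < lam i) (hmono : Antitone lam)
    (M : ℝ → ℕ → ℕ) (N : ℝ → ℕ) (htop : ℝ)
    (hM : ∀ ε > (0 : ℝ), ∀ n : ℕ,
      M ε n = sInf {c : ℕ | ∃ s : Finset X, s.card = c ∧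
        ∀ y : X, ∃ x ∈ s, ∀ j < n, dist (T^[j] y) (T^[j] x) ≤ ε})
    (hN : ∀ r > (0 : ℝ),
      N r = sInf {c : ℕ | ∃ s : Finset X, s.card = c ∧
        ∀ y : X, ∃ x ∈ s, dist y x < r})
    (hhtop : ∀ ε > (0 : ℝ),
      Filter.limsup (fun n : ℕ => Real.log (M ε n) / n) atTop ≤ htop)
    (hdim : (dimH (Set.univ : Set X)).toReal ≤
      Filter.liminf (fun r : ℝ => Real.log (N r) / Real.log (1 / r)) (nhdsWithin 0 (Set.Ioi 0)))
    (hineq : ∃ δ₀ > (0 : ℝ), ∃ c > (0 : ℝ), ∀ δ : ℝ, 0 < δ → δ < δ₀ →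
      ∃ ε₀ > (0 : ℝ), ∀ ε : ℝ, 0 < ε → ε < ε₀ → ∀ n : ℕ, 1 ≤ n →
        (N (c * ε * ((lam ⟨0, hk⟩ - δ) ^ ((n : ℝ) - 1))⁻¹) : ℝ) ≤
          ((2 : ℝ) ^ d * (lam ⟨0, hk⟩ - δ) ^ (d * ((n : ℝ) - 1)) *
            ∏ i, ((lam i - δ) ^ (dd i * ((n : ℝ) - 1)))⁻¹) * (M ε n : ℝ)) :
    ((dimH (Set.univ : Set X)).toReal - d) * Real.log (lam ⟨0, hk⟩) +
      ∑ i, dd i * Real.log (lam i) ≤ htop := by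
  rcases isEmpty_or_nonempty X with hE | hNe
  · -- empty space
    have hD : (dimH (Set.univ : Set X)).toReal = 0 := by
      rw [Set.univ_eq_empty_iff.mpr hE, dimH_empty]; simp
    have hM0 : ∀ n : ℕ, M 1 n = 0 := by
      intro n
      rw [hM 1 one_pos n]
      refine Nat.sInf_eq_zero.mpr (Or.inl ⟨∅, Finset.card_empty, fun y => (hE.false y).elim⟩)
    have h0 : (0 : ℝ) ≤ htop := by
      have := hhtop 1 one_pos
      simpa [hM0, Real.log_zero, limsup_const] using this
    refine le_trans ?_ h0
    rw [hD]
    have hlog1 : 0 ≤ Real.log (lam ⟨0, hk⟩) := Real.log_nonneg (hlam _).le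
    have hsum2 : ∑ i, dd i * Real.log (lam i) ≤ d * Real.log (lam ⟨0, hk⟩) := by
      calc ∑ i, dd i * Real.log (lam i) ≤ ∑ i, dd i * Real.log (lam ⟨0, hk⟩) := by
            refine Finset.sum_le_sum fun i _ => ?_
            exact mul_le_mul_of_nonneg_left
              (Real.log_le_log (by linarith [hlam i]) (hmono (show (⟨0, hk⟩ : Fin k) ≤ i from Fin.mk_le_of_le_val (Nat.zero_le _)))) (hdd i).le
        _ = (∑ i, dd i) * Real.log (lam ⟨0, hk⟩) := by rw [Finset.sum_mul]
        _ ≤ d * Real.log (lam ⟨0, hk⟩) := mul_le_mul_of_nonneg_right hsum hlog1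
    linarith
  · -- nonempty space
    obtain ⟨δ₀, hδ₀, c, hc, hmain⟩ := hineq
    set D := (dimH (Set.univ : Set X)).toReal with hD
    have hlast : ∀ i, lam ⟨k - 1, Nat.sub_lt hk one_pos⟩ ≤ lam i := by
      intro i
      refine hmono ?_
      simp only [Fin.le_def]
      exact Nat.le_pred_of_lt i.2
    set t₀ : ℝ := min δ₀ (lam ⟨k - 1, Nat.sub_lt hk one_pos⟩ - 1) with ht₀def
    have ht₀ : 0 < t₀ := lt_min hδ₀ (by linarith [hlam ⟨k - 1, Nat.sub_lt hk one_pos⟩])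
    have key : ∀ t ∈ Set.Ioo (0:ℝ) t₀,
        (D - d) * Real.log (lam ⟨0, hk⟩ - t) + ∑ i, dd i * Real.log (lam i - t) ≤ htop := by
      intro t ht
      obtain ⟨ht1, ht2⟩ := ht
      have htδ : t < δ₀ := lt_of_lt_of_le ht2 (min_le_left _ _)
      have hlamt : ∀ i, 1 < lam i - t := by
        intro i
        have h1 := hlast i
        have h2 : t < lam ⟨k - 1, Nat.sub_lt hk one_pos⟩ - 1 := by
          have := min_le_right δ₀ (lam ⟨k - 1, Nat.sub_lt hk one_pos⟩ - 1)
          rw [← ht₀def] at this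
          linarith
        linarith
      obtain ⟨ε₀, hε₀, hmt⟩ := hmain t ht1 htδ
      set ε : ℝ := ε₀ / 2 with hεdef
      have hεpos : 0 < ε := half_pos hε₀
      have hεlt : ε < ε₀ := half_lt_self hε₀
      have hIn := hmt ε hεpos hεlt
      set q : ℝ := lam ⟨0, hk⟩ - t with hqdef
      have hq : 1 < q := hlamt _
      have hq0 : (0:ℝ) < q := by linarith
      set L : ℝ := Real.log q with hLdef
      have hL : 0 < L := Real.log_pos hq
      set Li : Fin k → ℝ := fun i => Real.log (lam i - t) with hLidef
      set Bv : ℝ := d * L - ∑ i, dd i * Li i with hBvdef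
      set A : ℝ := d * Real.log 2 with hAdef
      set β : ℝ := Real.log (c * ε) with hβdef
      set r : ℕ → ℝ := fun n => c * ε * (q ^ ((n : ℝ) - 1))⁻¹ with hrdef
      have hrpos : ∀ n, 0 < r n := by
        intro n
        have : 0 < q ^ ((n : ℝ) - 1) := Real.rpow_pos_of_pos hq0 _
        positivity
      -- N is at least 1 on positive radii
      have hNr1 : ∀ rr : ℝ, 0 < rr → 1 ≤ N rr := by
        intro rr hrr
        rw [hN rr hrr]
        obtain ⟨s, hs⟩ := net_exists' (X := X) hrr
        have hmem : s.card ∈ {c : ℕ | ∃ s' : Finset X, s'.card = c ∧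
            ∀ y : X, ∃ x ∈ s', dist y x < rr} := ⟨s, rfl, hs⟩
        refine Nat.one_le_iff_ne_zero.mpr fun h0 => ?_
        rcases Nat.sInf_eq_zero.mp h0 with h0' | h0'
        · obtain ⟨s', hc', hcov'⟩ := h0'
          rw [Finset.card_eq_zero] at hc'
          obtain ⟨x, hx, -⟩ := hcov' (Classical.arbitrary X)
          rw [hc'] at hx
          exact Finset.notMem_empty x hx
        · rw [h0'] at hmem
          exact hmem
      -- bounds for M
      obtain ⟨F, hF⟩ := net_exists' (X := X) (half_pos hεpos)
      have hm1 : 1 ≤ F.card := by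
        obtain ⟨x, hx, -⟩ := hF (Classical.arbitrary X)
        exact Finset.card_pos.mpr ⟨x, hx⟩
      have hMle : ∀ n, 1 ≤ M ε n ∧ M ε n ≤ F.card ^ n := by
        intro n
        obtain ⟨s, hcard, hcov⟩ := bowen_cover' T F hF n
        constructor
        · rw [hM ε hεpos n]
          refine Nat.one_le_iff_ne_zero.mpr fun h0 => ?_
          rcases Nat.sInf_eq_zero.mp h0 with h0' | h0'
          · obtain ⟨s', hc', hcov'⟩ := h0'
            rw [Finset.card_eq_zero] at hc'
            obtain ⟨x, hx, -⟩ := hcov' (Classical.arbitrary X)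
            rw [hc'] at hx
            exact Finset.notMem_empty x hx
          · have hmem : s.card ∈ {c : ℕ | ∃ s' : Finset X, s'.card = c ∧
                ∀ y : X, ∃ x ∈ s', ∀ j < n, dist (T^[j] y) (T^[j] x) ≤ ε} := ⟨s, rfl, hcov⟩
            rw [h0'] at hmem
            exact hmem
        · rw [hM ε hεpos n]
          exact le_trans (Nat.sInf_le ⟨s, rfl, hcov⟩) hcard
      set m : ℕ := F.card with hmdef
      have hMpos : ∀ n, (0:ℝ) < (M ε n : ℝ) := by
        intro n
        exact_mod_cast (hMle n).1
      have flog : ∀ n, 0 ≤ Real.log (M ε n) := by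
        intro n
        refine Real.log_nonneg ?_
        exact_mod_cast (hMle n).1
      have fbdd : ∀ n : ℕ, Real.log (M ε n) / n ≤ Real.log m := by
        intro n
        have hlogm : 0 ≤ Real.log m := Real.log_nonneg (by exact_mod_cast hm1)
        rcases Nat.eq_zero_or_pos n with hn | hn
        · simp [hn, hlogm]
        · have hn0 : (0:ℝ) < n := by exact_mod_cast hn
          rw [div_le_iff₀ hn0]
          calc Real.log (M ε n) ≤ Real.log ((m : ℝ) ^ n) := by
                refine Real.log_le_log (hMpos n) ?_
                exact_mod_cast (hMle n).2
            _ = n * Real.log m := by rw [Real.log_pow]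
            _ = Real.log m * n := by ring
      -- logarithm of 1 / r n
      have hlog1r : ∀ n : ℕ, Real.log (1 / r n) = ((n : ℝ) - 1) * L - β := by
        intro n
        have h1 : r n = c * ε * (q ^ ((n : ℝ) - 1))⁻¹ := rfl
        have hcε : c * ε ≠ 0 := by positivity
        have hqe : q ^ ((n : ℝ) - 1) ≠ 0 := (Real.rpow_pos_of_pos hq0 _).ne'
        rw [one_div, Real.log_inv, h1, Real.log_mul hcε (inv_ne_zero hqe), Real.log_inv,
          Real.log_rpow hq0]
        ring
      -- the per-n inequality
      have hstep : ∀ n : ℕ, 1 ≤ n →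
          Real.log (N (r n)) ≤ A + ((n : ℝ) - 1) * Bv + Real.log (M ε n) := by
        intro n hn
        have h := hIn n hn
        have hN1 : (1:ℝ) ≤ (N (r n) : ℝ) := by exact_mod_cast hNr1 _ (hrpos n)
        have hprodpos : 0 < ∏ i, ((lam i - t) ^ (dd i * ((n:ℝ) - 1)))⁻¹ := by
          refine Finset.prod_pos fun i _ => ?_
          exact inv_pos.mpr (Real.rpow_pos_of_pos (by linarith [hlamt i]) _)
        have h2pos : (0:ℝ) < (2:ℝ) ^ d := Real.rpow_pos_of_pos two_pos _
        have hqpos : (0:ℝ) < q ^ (d * ((n:ℝ) - 1)) := Real.rpow_pos_of_pos hq0 _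
        have hCpos : 0 < (2:ℝ) ^ d * q ^ (d * ((n:ℝ) - 1)) *
            ∏ i, ((lam i - t) ^ (dd i * ((n:ℝ) - 1)))⁻¹ := by positivity
        have hlog := Real.log_le_log (by linarith : (0:ℝ) < (N (r n) : ℝ)) h
        rw [Real.log_mul hCpos.ne' (hMpos n).ne'] at hlog
        have hlogC : Real.log ((2:ℝ) ^ d * q ^ (d * ((n:ℝ) - 1)) *
            ∏ i, ((lam i - t) ^ (dd i * ((n:ℝ) - 1)))⁻¹) = A + ((n : ℝ) - 1) * Bv := by
          rw [Real.log_mul (by positivity) hprodpos.ne', Real.log_mul h2pos.ne' hqpos.ne',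
            Real.log_rpow two_pos, Real.log_rpow hq0,
            Real.log_prod (fun i _ => (inv_pos.mpr
              (Real.rpow_pos_of_pos (by linarith [hlamt i]) _)).ne')]
          have hterm : ∀ i ∈ (Finset.univ : Finset (Fin k)),
              Real.log ((lam i - t) ^ (dd i * ((n:ℝ) - 1)))⁻¹
                = -(((n:ℝ) - 1) * (dd i * Li i)) := by
            intro i _
            rw [Real.log_inv, Real.log_rpow (by linarith [hlamt i])]
            simp only [hLidef]
            ring
          rw [Finset.sum_congr rfl hterm, Finset.sum_neg_distrib, ← Finset.mul_sum]
          simp only [hBvdef, hAdef]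
          ring
        rw [hlogC] at hlog
        linarith
      -- r n tends to 0 within Ioi 0
      have heL : Tendsto (fun n : ℕ => ((n : ℝ) - 1) * L) atTop atTop := by
        have h1 : Tendsto (fun n : ℕ => (n : ℝ) - 1) atTop atTop := by
          simpa [sub_eq_add_neg] using
            tendsto_atTop_add_const_right atTop (-1 : ℝ) tendsto_natCast_atTop_atTop
        exact h1.atTop_mul_const hL
      have hrt : Tendsto r atTop (nhdsWithin 0 (Set.Ioi 0)) := by
        have hqe : Tendsto (fun n : ℕ => q ^ ((n : ℝ) - 1)) atTop atTop := by
          refine (Real.tendsto_exp_atTop.comp heL).congr fun n => ?_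
          rw [Function.comp_apply, Real.rpow_def_of_pos hq0, mul_comm]
        have h0 : Tendsto r atTop (nhds 0) := by
          have := hqe.inv_tendsto_atTop.const_mul (c * ε)
          simpa [hrdef, mul_assoc] using this
        rw [tendsto_nhdsWithin_iff]
        exact ⟨h0, Eventually.of_forall fun n => hrpos n⟩
      -- bounded below for the liminf argument
      have hgbd : IsBoundedUnder (· ≥ ·) (nhdsWithin (0:ℝ) (Set.Ioi 0))
          (fun rr : ℝ => Real.log (N rr) / Real.log (1 / rr)) := by
        refine ⟨0, ?_⟩
        rw [eventually_map]
        filter_upwards [Ioo_mem_nhdsGT_of_mem (Set.mem_Ico.mpr ⟨le_refl (0:ℝ), one_pos⟩)]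
          with rr hrr
        refine div_nonneg (Real.log_nonneg ?_) (Real.log_nonneg ?_)
        · exact_mod_cast hNr1 rr hrr.1
        · rw [le_one_div (by norm_num) hrr.1]
          simpa using hrr.2.le
      have hbddf : IsBoundedUnder (· ≤ ·) atTop (fun n : ℕ => Real.log (M ε n) / n) := by
        refine ⟨Real.log m, ?_⟩
        rw [eventually_map]
        exact Eventually.of_forall fbdd
      -- main estimate for every θ > 0
      have hkey2 : ∀ θ : ℝ, 0 < θ → D * L - Bv ≤ htop + θ := by
        intro θ hθ
        set η : ℝ := θ / (2 * L) with hηdef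
        have hη : 0 < η := by positivity
        have hηL : η * L = θ / 2 := by
          rw [hηdef]
          field_simp
        have hliminf : D - η < Filter.liminf
            (fun rr : ℝ => Real.log (N rr) / Real.log (1 / rr)) (nhdsWithin 0 (Set.Ioi 0)) :=
          lt_of_lt_of_le (by linarith) hdim
        have hev := eventually_lt_of_lt_liminf hliminf hgbd
        have hevn : ∀ᶠ n in atTop, D - η < Real.log (N (r n)) / Real.log (1 / r n) :=
          hrt.eventually hev
        have hev2 : ∀ᶠ n : ℕ in atTop, 0 < ((n : ℝ) - 1) * L - β := by
          have : Tendsto (fun n : ℕ => ((n : ℝ) - 1) * L - β) atTop atTop := by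
            simpa [sub_eq_add_neg] using tendsto_atTop_add_const_right atTop (-β) heL
          exact this.eventually_gt_atTop 0
        set G2 : ℕ → ℝ := fun n => (D - η) * ((1 - (n : ℝ)⁻¹) * L - β * (n : ℝ)⁻¹)
          - A * (n : ℝ)⁻¹ - (1 - (n : ℝ)⁻¹) * Bv with hG2def
        have hG2 : Tendsto G2 atTop (nhds ((D - η) * L - Bv)) := by
          have hinv : Tendsto (fun n : ℕ => ((n : ℝ))⁻¹) atTop (nhds 0) :=
            tendsto_inv_atTop_zero.comp tendsto_natCast_atTop_atTop
          have hone : Tendsto (fun n : ℕ => (1 : ℝ) - (n : ℝ)⁻¹) atTop (nhds (1 - 0)) :=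
            tendsto_const_nhds.sub hinv
          have h := (((hone.mul_const L).sub (hinv.const_mul β)).const_mul (D - η)).sub
            ((hinv.const_mul A).add (hone.mul_const Bv))
          have heq : (D - η) * (((1:ℝ) - 0) * L - β * 0) - (A * 0 + ((1:ℝ) - 0) * Bv)
              = (D - η) * L - Bv := by ring
          rw [heq] at h
          refine h.congr fun n => ?_
          simp only [hG2def]
          ring
        have hev3 : ∀ᶠ n : ℕ in atTop, (D - η) * L - Bv - θ / 2 < G2 n :=
          Filter.Tendsto.eventually_const_lt (by linarith) hG2
        have hfinal : ∀ᶠ n : ℕ in atTop, (D - η) * L - Bv - θ / 2 ≤ Real.log (M ε n) / n := by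
          filter_upwards [hevn, hev2, hev3, eventually_ge_atTop 1] with n h1 h2 h3 h4
          have hn0 : (0:ℝ) < (n : ℝ) := by exact_mod_cast h4
          have hNlog : (D - η) * (((n : ℝ) - 1) * L - β) ≤ Real.log (N (r n)) := by
            rw [hlog1r n] at h1
            exact (le_div_iff₀ h2).mp h1.le
          have hstepn := hstep n h4
          have hMlow : (D - η) * (((n : ℝ) - 1) * L - β) - A - ((n : ℝ) - 1) * Bv
              ≤ Real.log (M ε n) := by linarith
          have hdiv : ((D - η) * (((n : ℝ) - 1) * L - β) - A - ((n : ℝ) - 1) * Bv) / n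
              ≤ Real.log (M ε n) / n := by
            exact div_le_div_of_nonneg_right hMlow hn0.le
          have hG2eq : G2 n = ((D - η) * (((n : ℝ) - 1) * L - β) - A - ((n : ℝ) - 1) * Bv) / n := by
            simp only [hG2def]
            field_simp
          rw [hG2eq] at h3
          linarith
        have hle := le_limsup_of_frequently_le hfinal.frequently hbddf
        have hht := hhtop ε hεpos
        have : (D - η) * L = D * L - θ / 2 := by
          rw [sub_mul, hηL]
        linarith
      have hDLB : D * L - Bv ≤ htop := by
        by_contra hcon
        push_neg at hcon
        have := hkey2 ((D * L - Bv - htop) / 2) (by linarith)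
        linarith
      simp only [hBvdef, hLdef, hLidef, hqdef] at hDLB ⊢
      linarith

    -- limit t → 0⁺
    have hcont : Tendsto
        (fun t : ℝ => (D - d) * Real.log (lam ⟨0, hk⟩ - t) + ∑ i, dd i * Real.log (lam i - t))
        (nhdsWithin 0 (Set.Ioi 0))
        (nhds ((D - d) * Real.log (lam ⟨0, hk⟩ - 0) + ∑ i, dd i * Real.log (lam i - 0))) := by
      refine Filter.Tendsto.mono_left ?_ nhdsWithin_le_nhds
      have hlog : ∀ i : Fin k, Tendsto (fun t : ℝ => Real.log (lam i - t)) (nhds 0)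
          (nhds (Real.log (lam i - 0))) := by
        intro i
        refine ContinuousAt.tendsto ?_
        refine ContinuousAt.comp (Real.continuousAt_log ?_)
          ((continuous_const.sub continuous_id).continuousAt)
        simp only [sub_zero]
        exact ne_of_gt (by linarith [hlam i])
      exact (tendsto_const_nhds.mul (hlog _)).add
        (tendsto_finset_sum _ (fun i _ => tendsto_const_nhds.mul (hlog i)))
    have := le_of_tendsto hcont
      (Filter.eventually_of_mem (Ioo_mem_nhdsGT_of_mem ⟨le_refl (0:ℝ), ht₀⟩) key)
    simpa using this
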